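/- Let n be a positive integer and ζ_n a primitive n-th root of unity in ℂ. For all integers k ≥ 1, r ≥ 1, s ≥ 0 with r ≥ s and k ≥ r+s, the sum Σ_{k ∈ I(k,r,s)} z̄*_n(k; ζ_n) of the star values, taken over all indices of weight k, depth r, and height s, is a rational number. -/

import Mathlib

open Finset

/-- The set of tuples `(m_1,...,m_r)` with `n > m_1 > m_2 > ... > m_r > 0`. -/
def msets (n r : ℕ) : Finset (Fin r → Fin n) :=
  Finset.univ.filter fun m =>
    (∀ i j : Fin r, i < j → m j < m i) ∧ ∀ i, 0 < (m i : ℕ)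

/-- The set of tuples `(m_1,...,m_r)` with `n > m_1 ≥ m_2 ≥ ... ≥ m_r > 0`. -/
def msetsStar (n r : ℕ) : Finset (Fin r → Fin n) :=
  Finset.univ.filter fun m =>
    (∀ i j : Fin r, i ≤ j → m j ≤ m i) ∧ ∀ i, 0 < (m i : ℕ)

/-- The finite multiple harmonic q-series
`z_n(k_1,…,k_r; q) = Σ_{n > m_1 > … > m_r > 0} Π_i q^{(k_i-1)m_i}/[m_i]_q^{k_i}`,
where `[m]_q = (1-q^m)/(1-q)`. -/
noncomputable def z (n : ℕ) {r : ℕ} (k : Fin r → ℕ) (q : ℂ) : ℂ :=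
  ∑ m ∈ msets n r,
    ∏ i, q ^ ((k i - 1) * (m i : ℕ)) / ((1 - q ^ (m i : ℕ)) / (1 - q)) ^ (k i)

/-- The star version `z*_n(k; q)`, summed over `n > m_1 ≥ … ≥ m_r > 0`. -/
noncomputable def zstar (n : ℕ) {r : ℕ} (k : Fin r → ℕ) (q : ℂ) : ℂ :=
  ∑ m ∈ msetsStar n r,
    ∏ i, q ^ ((k i - 1) * (m i : ℕ)) / ((1 - q ^ (m i : ℕ)) / (1 - q)) ^ (k i)

/-- The modified value `z̄_n(k;q) = (1-q)^{-wt(k)} z_n(k;q)`. -/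
noncomputable def zbar (n : ℕ) {r : ℕ} (k : Fin r → ℕ) (q : ℂ) : ℂ :=
  (1 - q)⁻¹ ^ (∑ i, k i) * z n k q

/-- The modified star value `z̄*_n(k;q) = (1-q)^{-wt(k)} z*_n(k;q)`. -/
noncomputable def zstarbar (n : ℕ) {r : ℕ} (k : Fin r → ℕ) (q : ℂ) : ℂ :=
  (1 - q)⁻¹ ^ (∑ i, k i) * zstar n k q

/-- `I(k,r,s)`: the set of indices (tuples of positive integers) of weight `k`,
depth `r` and height `s`. -/
def indexSet3 (k r s : ℕ) : Finset (Fin r → ℕ) :=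
  (Finset.Nat.antidiagonalTuple r k).filter fun a =>
    (∀ i, 1 ≤ a i) ∧ (Finset.univ.filter fun i => 2 ≤ a i).card = s

/-- `I(k,r)`: the set of indices of weight `k` and depth `r`. -/
def indexSet2 (k r : ℕ) : Finset (Fin r → ℕ) :=
  (Finset.Nat.antidiagonalTuple r k).filter fun a => ∀ i, 1 ≤ a i

/-- The one-variable finite q-multiple polylogarithm
`L_{k_1,…,k_r}^{(n)}(t;q) = Σ_{n > m_1 > … > m_r > 0} t^{m_1} / Π_i (1-q^{m_i})^{k_i}`,
with `L_∅(t) = 1`. -/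
noncomputable def Lpoly (n : ℕ) {r : ℕ} (k : Fin r → ℕ) (q t : ℂ) : ℂ :=
  ∑ m ∈ msets n r,
    ∏ i : Fin r, (if i.val = 0 then t ^ (m i : ℕ) else 1) / (1 - q ^ (m i : ℕ)) ^ (k i)

/-- The star version `L*_{k_1,…,k_r}^{(n)}(t;q)`, summed over `n > m_1 ≥ … ≥ m_r > 0`. -/
noncomputable def LpolyStar (n : ℕ) {r : ℕ} (k : Fin r → ℕ) (q t : ℂ) : ℂ :=
  ∑ m ∈ msetsStar n r,
    ∏ i : Fin r, (if i.val = 0 then t ^ (m i : ℕ) else 1) / (1 - q ^ (m i : ℕ)) ^ (k i)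

/-! ### Auxiliary material for the rationality proof -/

section Aux

lemma pow_mod_eq_pow {M : Type*} [Monoid M] {ζ : M} {n : ℕ} (h1 : ζ ^ n = 1) (a : ℕ) :
    ζ ^ (a % n) = ζ ^ a := by
  conv_rhs => rw [← Nat.mod_add_div a n, pow_add, pow_mul, h1, one_pow, mul_one]

lemma pow_eq_pow_of_modEq' {M : Type*} [Monoid M] {ζ : M} {n : ℕ} (h1 : ζ ^ n = 1)
    {x y : ℕ} (h : x ≡ y [MOD n]) : ζ ^ x = ζ ^ y := by
  rw [← pow_mod_eq_pow h1 x, ← pow_mod_eq_pow h1 y]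
  exact congrArg _ h

/-- Multiplication by `c` (coprime to `n`) as a permutation of `Fin n`. -/
noncomputable def mulPerm {n : ℕ} (hn : 0 < n) (c : ℕ) (hc : Nat.Coprime c n) :
    Equiv.Perm (Fin n) :=
  Equiv.ofBijective (fun x => ⟨c * (x : ℕ) % n, Nat.mod_lt _ hn⟩)
    (Finite.injective_iff_bijective.mp (by
      intro x y hxy
      have h : c * (x : ℕ) % n = c * (y : ℕ) % n := congrArg Fin.val hxy
      have h2 : (x : ℕ) ≡ (y : ℕ) [MOD n] :=
        Nat.ModEq.cancel_left_of_coprime (Nat.Coprime.symm hc) h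
      have hx := x.2; have hy := y.2
      exact Fin.ext (by
        rwa [Nat.ModEq, Nat.mod_eq_of_lt hx, Nat.mod_eq_of_lt hy] at h2)))

lemma mulPerm_val {n : ℕ} (hn : 0 < n) (c : ℕ) (hc : Nat.Coprime c n) (x : Fin n) :
    ((mulPerm hn c hc x : Fin n) : ℕ) = c * (x : ℕ) % n := rfl

lemma mulPerm_modEq {n : ℕ} (hn : 0 < n) (c : ℕ) (hc : Nat.Coprime c n) (x : Fin n) :
    ((mulPerm hn c hc x : Fin n) : ℕ) ≡ c * (x : ℕ) [MOD n] := by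
  rw [mulPerm_val]
  exact Nat.mod_modEq _ n

lemma mulPerm_pos {n : ℕ} (hn : 0 < n) (c : ℕ) (hc : Nat.Coprime c n) (x : Fin n) :
    (0 < ((mulPerm hn c hc x : Fin n) : ℕ)) ↔ 0 < (x : ℕ) := by
  rw [mulPerm_val]
  constructor
  · intro h
    by_contra hx
    push_neg at hx
    interval_cases hx' : (x : ℕ)
    simp at h
  · intro h
    rcases Nat.eq_zero_or_pos (c * (x : ℕ) % n) with h0 | h0
    · exfalso
      have hdvd : n ∣ c * (x : ℕ) := Nat.dvd_of_mod_eq_zero h0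
      have : n ∣ (x : ℕ) := (Nat.Coprime.symm hc).dvd_of_dvd_mul_left hdvd
      have := Nat.eq_zero_of_dvd_of_lt this x.2
      omega
    · exact h0

/-- Sorting a tuple into weakly decreasing order. -/
noncomputable def sortT {n r : ℕ} (g : Fin r → Fin n) : Fin r → Fin n :=
  g ∘ (Tuple.sort (OrderDual.toDual ∘ g))

lemma sortT_sorted {n r : ℕ} (g : Fin r → Fin n) :
    ∀ i j : Fin r, i ≤ j → sortT g j ≤ sortT g i := by
  intro i j hij
  have := Tuple.monotone_sort (OrderDual.toDual ∘ g) hij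
  exact this

lemma sortT_eq_comp {n r : ℕ} (g : Fin r → Fin n) :
    sortT g = g ∘ (Tuple.sort (OrderDual.toDual ∘ g) : Equiv.Perm (Fin r)) := rfl

/-- Uniqueness of the weakly-decreasing rearrangement. -/
lemma antitone_unique {n r : ℕ} {m : Fin r → Fin n} (σ : Equiv.Perm (Fin r))
    (h1 : ∀ i j : Fin r, i ≤ j → m (σ j) ≤ m (σ i))
    (h2 : ∀ i j : Fin r, i ≤ j → m j ≤ m i) :
    m ∘ σ = m := by
  have hu := Tuple.unique_monotone (f := OrderDual.toDual ∘ m) (σ := σ)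
    (τ := Equiv.refl (Fin r))
    (fun i j hij => h1 i j hij) (fun i j hij => h2 i j hij)
  funext i
  have := congrFun hu i
  simpa using this

lemma mem_msetsStar_iff {n r : ℕ} {m : Fin r → Fin n} :
    m ∈ msetsStar n r ↔ (∀ i j : Fin r, i ≤ j → m j ≤ m i) ∧ ∀ i, 0 < (m i : ℕ) := by
  simp [msetsStar]

/-- Reindexing a sum over weakly-decreasing tuples along a `0`-preserving permutation of
`Fin n`, for a summand invariant under permutations of the coordinates. -/
lemma sum_msetsStar_perm {n r : ℕ} (π : Equiv.Perm (Fin n))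
    (hπ : ∀ x : Fin n, 0 < ((π x : Fin n) : ℕ) ↔ 0 < (x : ℕ))
    {β : Type*} [AddCommMonoid β] (F : (Fin r → Fin n) → β)
    (hF : ∀ (m : Fin r → Fin n) (σ : Equiv.Perm (Fin r)), F (m ∘ σ) = F m) :
    ∑ m ∈ msetsStar n r, F (π ∘ m) = ∑ m ∈ msetsStar n r, F m := by
  have hmem : ∀ (τ : Equiv.Perm (Fin n)) (hτ : ∀ x : Fin n, 0 < ((τ x : Fin n) : ℕ) ↔ 0 < (x : ℕ))
      (m : Fin r → Fin n), m ∈ msetsStar n r → sortT (τ ∘ m) ∈ msetsStar n r := by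
    intro τ hτ m hm
    rw [mem_msetsStar_iff] at hm ⊢
    refine ⟨sortT_sorted _, fun i => ?_⟩
    rw [sortT_eq_comp]
    exact (hτ _).mpr (hm.2 _)
  have hround : ∀ (τ : Equiv.Perm (Fin n)) (m : Fin r → Fin n), m ∈ msetsStar n r →
      sortT (τ.symm ∘ sortT (τ ∘ m)) = m := by
    intro τ m hm
    rw [mem_msetsStar_iff] at hm
    have hs1 : τ.symm ∘ sortT (τ ∘ m) = m ∘ (Tuple.sort (OrderDual.toDual ∘ (τ ∘ m)) :
        Equiv.Perm (Fin r)) := by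
      funext i
      simp [sortT, Function.comp]
    set σ1 : Equiv.Perm (Fin r) := Tuple.sort (OrderDual.toDual ∘ (τ ∘ m)) with hσ1
    rw [hs1, sortT_eq_comp]
    set σ2 : Equiv.Perm (Fin r) := Tuple.sort (OrderDual.toDual ∘ (m ∘ σ1)) with hσ2
    have hcomp : (m ∘ σ1) ∘ σ2 = m ∘ (σ2.trans σ1) := by
      funext i; simp [Function.comp]
    rw [hcomp]
    apply antitone_unique (σ2.trans σ1)
    · intro i j hij
      have := sortT_sorted (m ∘ σ1) i j hij
      rw [sortT_eq_comp] at this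
      simpa [Function.comp] using this
    · exact hm.1
  refine Finset.sum_nbij' (fun m => sortT (π ∘ m)) (fun m => sortT (π.symm ∘ m)) ?_ ?_ ?_ ?_ ?_
  · intro m hm; exact hmem π hπ m hm
  · intro m hm
    refine hmem π.symm ?_ m hm
    intro x
    have := hπ (π.symm x)
    simpa using this.symm
  · intro m hm; exact hround π m hm
  · intro m hm
    have := hround π.symm m hm
    simpa using this
  · intro m hm
    exact (hF (π ∘ m) (Tuple.sort (OrderDual.toDual ∘ (π ∘ m)))).symm

/-- The core sum: `∑_{m} ∑_{a ∈ I(k,r,s)} ∏_i ζ^((aᵢ-1)mᵢ) (1-ζ^mᵢ)^{-aᵢ}`. -/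
noncomputable def Score {K : Type*} [Field K] (n k r s : ℕ) (ζ : K) : K :=
  ∑ m ∈ msetsStar n r, ∑ a ∈ indexSet3 k r s,
    ∏ i, ζ ^ ((a i - 1) * (m i : ℕ)) * (((1 - ζ ^ (m i : ℕ)) ^ (a i))⁻¹)

lemma indexSet3_comp_mem {k r s : ℕ} {a : Fin r → ℕ} (σ : Equiv.Perm (Fin r))
    (ha : a ∈ indexSet3 k r s) : a ∘ σ ∈ indexSet3 k r s := by
  rw [indexSet3, Finset.mem_filter, Finset.Nat.mem_antidiagonalTuple] at ha ⊢
  obtain ⟨hsum, hone, hcard⟩ := ha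
  refine ⟨by simpa using Equiv.sum_comp σ a ▸ hsum, fun i => hone (σ i), ?_⟩
  rw [← hcard]
  apply Finset.card_bij' (fun i _ => σ i) (fun i _ => σ.symm i)
  · intro i hi
    simp only [Finset.mem_filter, Finset.mem_univ, true_and] at hi ⊢
    exact hi
  · intro i hi
    simp only [Finset.mem_filter, Finset.mem_univ, true_and] at hi ⊢
    simpa using hi
  · intro i _; simp
  · intro i _; simp

/-- The inner sum over `indexSet3` is invariant under permuting the tuple `m`. -/
lemma innerSum_comp_perm {K : Type*} [Field K] (ζ : K) {n k r s : ℕ}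
    (m : Fin r → Fin n) (σ : Equiv.Perm (Fin r)) :
    (∑ a ∈ indexSet3 k r s,
      ∏ i, ζ ^ ((a i - 1) * ((m ∘ σ) i : ℕ)) * (((1 - ζ ^ ((m ∘ σ) i : ℕ)) ^ (a i))⁻¹))
    = ∑ a ∈ indexSet3 k r s,
      ∏ i, ζ ^ ((a i - 1) * (m i : ℕ)) * (((1 - ζ ^ (m i : ℕ)) ^ (a i))⁻¹) := by
  refine Finset.sum_nbij' (fun a => a ∘ σ.symm) (fun a => a ∘ σ) ?_ ?_ ?_ ?_ ?_
  · intro a ha; exact indexSet3_comp_mem σ.symm ha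
  · intro a ha; exact indexSet3_comp_mem σ ha
  · intro a _; funext i; simp
  · intro a _; funext i; simp
  · intro a _
    show (∏ i, ζ ^ ((a i - 1) * ((m ∘ σ) i : ℕ)) * (((1 - ζ ^ ((m ∘ σ) i : ℕ)) ^ (a i))⁻¹))
      = ∏ i, ζ ^ (((a ∘ ⇑σ.symm) i - 1) * (m i : ℕ)) * (((1 - ζ ^ (m i : ℕ)) ^ ((a ∘ ⇑σ.symm) i))⁻¹)
    simp only [Function.comp_apply]
    rw [← Equiv.prod_comp σ
      (fun j => ζ ^ ((a (σ.symm j) - 1) * (m j : ℕ)) * (((1 - ζ ^ (m j : ℕ)) ^ (a (σ.symm j)))⁻¹))]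
    refine Finset.prod_congr rfl fun i _ => ?_
    simp [Function.comp]

/-- Key invariance: replacing `ζ` by `ζ^c` with `c` coprime to `n` does not change the
core sum. -/
lemma score_pow_coprime {K : Type*} [Field K] {n : ℕ} (hn : 0 < n) {ζ : K} (h1 : ζ ^ n = 1)
    {c : ℕ} (hc : Nat.Coprime c n) (k r s : ℕ) :
    Score n k r s (ζ ^ c) = Score n k r s ζ := by
  set π := mulPerm hn c hc with hπdef
  have hstep : ∀ m : Fin r → Fin n,
      (∑ a ∈ indexSet3 k r s,
        ∏ i, (ζ ^ c) ^ ((a i - 1) * (m i : ℕ)) * (((1 - (ζ ^ c) ^ (m i : ℕ)) ^ (a i))⁻¹))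
      = ∑ a ∈ indexSet3 k r s,
        ∏ i, ζ ^ ((a i - 1) * ((π ∘ m) i : ℕ)) * (((1 - ζ ^ ((π ∘ m) i : ℕ)) ^ (a i))⁻¹) := by
    intro m
    refine Finset.sum_congr rfl fun a _ => Finset.prod_congr rfl fun i _ => ?_
    have hmod := mulPerm_modEq hn c hc (m i)
    have hpow : (ζ ^ c) ^ ((m i : ℕ)) = ζ ^ (((π (m i) : Fin n)) : ℕ) := by
      rw [← pow_mul]
      exact (pow_eq_pow_of_modEq' h1 hmod).symm
    have hpow2 : (ζ ^ c) ^ ((a i - 1) * (m i : ℕ)) =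
        ζ ^ ((a i - 1) * (((π (m i) : Fin n)) : ℕ)) := by
      rw [← pow_mul]
      refine (pow_eq_pow_of_modEq' h1 ?_).symm
      calc (a i - 1) * ((π (m i) : Fin n) : ℕ) ≡ (a i - 1) * (c * (m i : ℕ)) [MOD n] :=
            hmod.mul_left _
        _ = c * ((a i - 1) * (m i : ℕ)) := by ring
    rw [hpow, hpow2]
    rfl
  unfold Score
  rw [show (∑ m ∈ msetsStar n r, ∑ a ∈ indexSet3 k r s,
        ∏ i, (ζ ^ c) ^ ((a i - 1) * (m i : ℕ)) * (((1 - (ζ ^ c) ^ (m i : ℕ)) ^ (a i))⁻¹))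
      = ∑ m ∈ msetsStar n r, ∑ a ∈ indexSet3 k r s,
        ∏ i, ζ ^ ((a i - 1) * ((π ∘ m) i : ℕ)) * (((1 - ζ ^ ((π ∘ m) i : ℕ)) ^ (a i))⁻¹)
    from Finset.sum_congr rfl fun m _ => hstep m]
  exact sum_msetsStar_perm π (mulPerm_pos hn c hc)
    (fun m => ∑ a ∈ indexSet3 k r s,
      ∏ i, ζ ^ ((a i - 1) * (m i : ℕ)) * (((1 - ζ ^ (m i : ℕ)) ^ (a i))⁻¹))
    (fun m σ => innerSum_comp_perm ζ m σ)

/-- Ring homomorphisms between fields commute with the core sum. -/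
lemma map_score {K L : Type*} [Field K] [Field L] (f : K →+* L) (n k r s : ℕ) (ζ : K) :
    f (Score n k r s ζ) = Score n k r s (f ζ) := by
  simp only [Score, map_sum, map_prod, map_mul, map_pow, map_inv₀, map_sub, map_one]

/-- The sum of `zstarbar` equals the core sum, at a primitive root (for `n ≥ 2`). -/
lemma sum_zstarbar_eq_score {n : ℕ} (hn : 1 < n) {ζ : ℂ} (hζ : IsPrimitiveRoot ζ n)
    (k r s : ℕ) : ∑ a ∈ indexSet3 k r s, zstarbar n a ζ = Score n k r s ζ := by
  have hζ1 : (1 : ℂ) - ζ ≠ 0 := sub_ne_zero.mpr (hζ.ne_one hn).symm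
  rw [Score, Finset.sum_comm]
  refine Finset.sum_congr rfl fun a _ => ?_
  unfold zstarbar zstar
  rw [Finset.mul_sum]
  refine Finset.sum_congr rfl fun m _ => ?_
  have hfac : ∀ i : Fin r,
      ζ ^ ((a i - 1) * (m i : ℕ)) / ((1 - ζ ^ (m i : ℕ)) / (1 - ζ)) ^ (a i)
      = (1 - ζ) ^ (a i) *
        (ζ ^ ((a i - 1) * (m i : ℕ)) * (((1 - ζ ^ (m i : ℕ)) ^ (a i))⁻¹)) := by
    intro i
    rw [div_pow, div_div_eq_mul_div, div_eq_mul_inv, mul_comm (ζ ^ ((a i - 1) * (m i : ℕ)))]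
    ring
  rw [Finset.prod_congr rfl fun i _ => hfac i, Finset.prod_mul_distrib,
    Finset.prod_pow_eq_pow_sum, ← mul_assoc, inv_pow, inv_mul_cancel₀ (pow_ne_zero _ hζ1),
    one_mul]

end Aux

/-- the sum of `z̄*_n(k; ζ_n)` over indices of fixed weight, depth and
height is rational. -/
theorem zstarbar_sum_weight_depth_height_rational (n : ℕ) (hn : 0 < n) (ζ : ℂ)
    (hζ : IsPrimitiveRoot ζ n) (k r s : ℕ) (hk : 1 ≤ k) (hr : 1 ≤ r)
    (hsr : s ≤ r) (hkrs : r + s ≤ k) :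
    ∃ c : ℚ, ∑ a ∈ indexSet3 k r s, zstarbar n a ζ = (c : ℂ) := by
  rcases eq_or_lt_of_le (show 1 ≤ n from hn) with hn1 | hn2
  · -- n = 1 : everything is empty
    refine ⟨0, ?_⟩
    have hempty : msetsStar 1 r = ∅ := by
      refine Finset.eq_empty_of_forall_notMem fun m hm => ?_
      rw [mem_msetsStar_iff] at hm
      have h := hm.2 ⟨0, hr⟩
      have := (m ⟨0, hr⟩).2
      omega
    have : ∀ a : Fin r → ℕ, zstarbar n a ζ = 0 := by
      intro a
      unfold zstarbar zstar
      rw [← hn1, hempty]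
      simp
    simp [this]
  · -- n ≥ 2 : Galois-theoretic argument
    haveI : NeZero n := ⟨hn.ne'⟩
    set np : ℕ+ := ⟨n, hn⟩ with hnp
    haveI : NeZero (np : ℕ) := ⟨hn.ne'⟩
    set L := CyclotomicField np ℚ with hL
    haveI : IsCyclotomicExtension {(np : ℕ)} ℚ L := CyclotomicField.isCyclotomicExtension (np : ℕ) ℚ
    haveI : IsGalois ℚ L := IsCyclotomicExtension.isGalois {(np : ℕ)} ℚ L
    haveI : FiniteDimensional ℚ L := IsCyclotomicExtension.finiteDimensional {(np : ℕ)} ℚ L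
    set η := IsCyclotomicExtension.zeta (np : ℕ) ℚ L with hη
    have hηprim : IsPrimitiveRoot η n := IsCyclotomicExtension.zeta_spec (np : ℕ) ℚ L
    set SL : L := Score n k r s η with hSL
    -- every automorphism fixes SL
    have hinv : ∀ σ : L ≃ₐ[ℚ] L, σ SL = SL := by
      intro σ
      have hση : IsPrimitiveRoot (σ η) n :=
        hηprim.map_of_injective σ.injective
      obtain ⟨c, hcn, hc⟩ := hηprim.eq_pow_of_pow_eq_one hση.pow_eq_one
      have hccop : Nat.Coprime c n := by
        rw [← hηprim.pow_iff_coprime hn c, hc]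
        exact hση
      have : (σ : L →+* L) SL = Score n k r s (σ η) := map_score (σ : L →+* L) n k r s η
      rw [hSL] at this ⊢
      rw [show σ (Score n k r s η) = (σ : L →+* L) (Score n k r s η) from rfl, this, ← hc]
      exact score_pow_coprime hn hηprim.pow_eq_one hccop k r s
    -- hence SL is in the bottom intermediate field
    have hbotfix : IntermediateField.fixingSubgroup (⊥ : IntermediateField ℚ L) = ⊤ := by
      ext σ
      simp only [Subgroup.mem_top, iff_true]
      rw [IntermediateField.mem_fixingSubgroup_iff]
      intro x hx
      rw [IntermediateField.mem_bot] at hx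
      obtain ⟨q, rfl⟩ := hx
      exact σ.commutes q
    have hfixbot : IntermediateField.fixedField (⊤ : Subgroup (L ≃ₐ[ℚ] L)) =
        (⊥ : IntermediateField ℚ L) := by
      rw [← hbotfix]
      exact IsGalois.fixedField_fixingSubgroup ⊥
    have hSLbot : SL ∈ (⊥ : IntermediateField ℚ L) := by
      rw [← hfixbot]
      intro g
      exact hinv g.1
    rw [IntermediateField.mem_bot] at hSLbot
    obtain ⟨q, hq⟩ := hSLbot
    refine ⟨q, ?_⟩
    -- embed L into ℂ
    haveI := IsCyclotomicExtension.isSplittingField_X_pow_sub_one (np : ℕ) ℚ L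
    have hsplit : Polynomial.Splits ((Polynomial.X ^ ((np : ℕ)) - 1 : Polynomial ℚ).map (algebraMap ℚ ℂ)) :=
      IsAlgClosed.splits _
    set φ : L →ₐ[ℚ] ℂ := Polynomial.IsSplittingField.lift L (Polynomial.X ^ ((np : ℕ)) - 1) hsplit
      with hφ
    have hφη : IsPrimitiveRoot (φ η) n := hηprim.map_of_injective φ.injective
    obtain ⟨d, hdn, hd⟩ := hζ.eq_pow_of_pow_eq_one hφη.pow_eq_one
    have hdcop : Nat.Coprime d n := by
      rw [← hζ.pow_iff_coprime hn d, hd]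
      exact hφη
    have hmap : φ SL = Score n k r s (φ η) := map_score (φ : L →+* ℂ) n k r s η
    have hscoreζ : Score n k r s (φ η) = Score n k r s ζ := by
      rw [← hd]
      exact score_pow_coprime hn hζ.pow_eq_one hdcop k r s
    rw [sum_zstarbar_eq_score hn2 hζ k r s, ← hscoreζ, ← hmap, ← hq]
    have : φ (algebraMap ℚ L q) = algebraMap ℚ ℂ q := φ.commutes q
    rw [this]
    simp
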